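/- (Lundberg's equation, right solution.) For v ∈ (0,1] let G_v := Σ_{n=0}^∞ v^n · M(n,1), where M(n,1) is the N×N matrix whose (i,j)-entry is the probability of {τ_1^+ = n, J_n = j} in the model with initial distribution δ_i and initial surplus x = 0. Then G_v satisfies G_v = v · Σ_{m=0}^∞ Λ(m) · G_v^m, the series on the right converging entrywise. -/

import Mathlib

open scoped BigOperators ENNReal Classical

noncomputable section

namespace CMB

/-- The weight that the compound Markov binomial model with horizon `n`, jump matrices `Λ`
and initial distribution `μ` assigns to the path `(J, C)`. -/
def pathWeight {N : ℕ} (Λ : ℕ → Matrix (Fin N) (Fin N) ℝ) (μ : Fin N → ℝ) (n : ℕ)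
    (J : Fin (n + 1) → Fin N) (C : Fin n → ℕ) : ℝ :=
  μ (J 0) * ∏ k : Fin n, Λ (C k) (J k.castSucc) (J k.succ)

/-- The probability of the event `A` in the horizon-`n` compound Markov binomial model:
the sum of the weights of the paths belonging to the event. -/
def prob {N : ℕ} (Λ : ℕ → Matrix (Fin N) (Fin N) ℝ) (μ : Fin N → ℝ) (n : ℕ)
    (A : (Fin (n + 1) → Fin N) → (Fin n → ℕ) → Prop) : ℝ :=
  ∑' p : { p : (Fin (n + 1) → Fin N) × (Fin n → ℕ) // A p.1 p.2 },
    pathWeight Λ μ n p.1.1 p.1.2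

/-- Partial sums `S_k = C_1 + ⋯ + C_k` of the claims (`C i` is claim number `i+1`). -/
def S {n : ℕ} (C : Fin n → ℕ) (k : ℕ) : ℕ :=
  ∑ j : Fin n, if (j : ℕ) < k then C j else 0

/-- Dirac initial distribution `δ_i`. -/
def delta {N : ℕ} (i : Fin N) : Fin N → ℝ := fun i' => if i' = i then 1 else 0

/-- `hitM Λ n a i j` is the probability, in the model with initial distribution `δ_i` and
initial surplus `x = 0` (so `X_k = k - S_k`), of the event `{τ_a^+ = n, J_n = j}`,
i.e. `X_k < a` for all `k < n` and `X_n ≥ a` and `J_n = j`. -/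
def hitM {N : ℕ} (Λ : ℕ → Matrix (Fin N) (Fin N) ℝ) (n a : ℕ) : Matrix (Fin N) (Fin N) ℝ :=
  fun i j => prob Λ (delta i) n fun J C =>
    (∀ k, k < n → (k : ℤ) - S C k < (a : ℤ)) ∧ (a : ℤ) ≤ (n : ℤ) - S C n ∧ J (Fin.last n) = j

/-- `Gser Λ v a` is the matrix `G_v(a) = Σ_{n=0}^∞ v^n · M(n,a)`, entrywise. -/
def Gser {N : ℕ} (Λ : ℕ → Matrix (Fin N) (Fin N) ℝ) (v : ℝ) (a : ℕ) :
    Matrix (Fin N) (Fin N) ℝ := fun i j => ∑' n : ℕ, v ^ n * hitM Λ n a i j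


section ENN
open Finset
variable {N : ℕ} {Λ : ℕ → Matrix (Fin N) (Fin N) ℝ} {P : Matrix (Fin N) (Fin N) ℝ}


def eL (Λ : ℕ → Matrix (Fin N) (Fin N) ℝ) (m : ℕ) : Matrix (Fin N) (Fin N) ℝ≥0∞ :=
  fun i j => ENNReal.ofReal (Λ m i j)

def ehit (Λ : ℕ → Matrix (Fin N) (Fin N) ℝ) : ℕ → ℕ → Matrix (Fin N) (Fin N) ℝ≥0∞
  | 0, 0 => 1
  | 0, _ + 1 => 0
  | _ + 1, 0 => 0
  | n + 1, a + 1 => fun i j => ∑' m : ℕ, ∑ l, eL Λ m i l * ehit Λ n (a + m) l j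

@[simp] lemma ehit_zero_zero : ehit Λ 0 0 = 1 := rfl
@[simp] lemma ehit_zero_succ (a : ℕ) : ehit Λ 0 (a + 1) = 0 := rfl
@[simp] lemma ehit_succ_zero (n : ℕ) : ehit Λ (n + 1) 0 = 0 := rfl

lemma ehit_succ_succ (n a : ℕ) (i j : Fin N) :
    ehit Λ (n + 1) (a + 1) i j = ∑' m : ℕ, ∑ l, eL Λ m i l * ehit Λ n (a + m) l j := rfl

lemma row_sum_one (hΛ : ∀ m i j, 0 ≤ Λ m i j)
    (hP : ∀ i j, HasSum (fun m => Λ m i j) (P i j))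
    (hPstoch : ∀ i, ∑ j, P i j = 1) (i : Fin N) :
    ∑ l, ∑' m : ℕ, eL Λ m i l = 1 := by
  have h1 : ∀ l, ∑' m : ℕ, eL Λ m i l = ENNReal.ofReal (P i l) := by
    intro l
    rw [show (fun m => eL Λ m i l) = fun m => ENNReal.ofReal (Λ m i l) from rfl,
      ← ENNReal.ofReal_tsum_of_nonneg (fun m => hΛ m i l) (hP i l).summable,
      (hP i l).tsum_eq]
  simp only [h1]
  rw [← ENNReal.ofReal_sum_of_nonneg (fun l _ => (hP i l).nonneg (fun m => hΛ m i l)),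
    hPstoch i, ENNReal.ofReal_one]

lemma ehit_mass (hΛ : ∀ m i j, 0 ≤ Λ m i j)
    (hP : ∀ i j, HasSum (fun m => Λ m i j) (P i j))
    (hPstoch : ∀ i, ∑ j, P i j = 1) :
    ∀ T a (i : Fin N), ∑ j, ∑ n ∈ Finset.range T, ehit Λ n a i j ≤ 1 := by
  intro T
  induction T with
  | zero => simp
  | succ T ih =>
    intro a i
    match a with
    | 0 =>
      have : ∀ j, ∑ n ∈ Finset.range (T + 1), ehit Λ n 0 i j = (1 : Matrix (Fin N) (Fin N) ℝ≥0∞) i j := by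
        intro j
        rw [Finset.sum_range_succ']
        simp [ehit]
      simp only [this]
      simp [Matrix.one_apply]
    | a + 1 =>
      have h2 : ∀ j, ∑ n ∈ Finset.range (T + 1), ehit Λ n (a + 1) i j
          = ∑ n ∈ Finset.range T, ehit Λ (n + 1) (a + 1) i j := by
        intro j; rw [Finset.sum_range_succ']; simp [ehit]
      calc ∑ j, ∑ n ∈ Finset.range (T + 1), ehit Λ n (a + 1) i j
          = ∑ j, ∑ n ∈ Finset.range T, ∑' m : ℕ, ∑ l, eL Λ m i l * ehit Λ n (a + m) l j := by
            simp only [h2, ehit_succ_succ]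
        _ = ∑' m : ℕ, ∑ j, ∑ n ∈ Finset.range T, ∑ l, eL Λ m i l * ehit Λ n (a + m) l j := by
            rw [Summable.tsum_finsetSum (fun j _ => ENNReal.summable)]
            congr 1; funext j
            rw [Summable.tsum_finsetSum (fun n _ => ENNReal.summable)]
        _ = ∑' m : ℕ, ∑ l, eL Λ m i l * ∑ j, ∑ n ∈ Finset.range T, ehit Λ n (a + m) l j := by
            congr 1; funext m
            simp only [Finset.mul_sum]
            rw [Finset.sum_comm]
            have h3 : ∀ n, (∑ j, ∑ l, eL Λ m i l * ehit Λ n (a + m) l j)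
                = ∑ l, ∑ j, eL Λ m i l * ehit Λ n (a + m) l j := fun n => Finset.sum_comm
            simp only [h3]
            rw [Finset.sum_comm]
            exact Finset.sum_congr rfl fun l _ => Finset.sum_comm
        _ ≤ ∑' m : ℕ, ∑ l, eL Λ m i l * 1 := by
            refine ENNReal.tsum_le_tsum (fun m => Finset.sum_le_sum (fun l _ => ?_))
            exact mul_le_mul_right (ih (a + m) l) _
        _ = ∑ l, ∑' m : ℕ, eL Λ m i l := by
            rw [Summable.tsum_finsetSum (fun l _ => ENNReal.summable)]; simp
        _ = 1 := row_sum_one hΛ hP hPstoch i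

lemma ehit_add : ∀ n a b, ehit Λ n (a + b) =
    ∑ k ∈ Finset.range (n + 1), ehit Λ k a * ehit Λ (n - k) b := by
  intro n
  induction n with
  | zero =>
    intro a b
    rw [Finset.range_one, Finset.sum_singleton]
    match a, b with
    | 0, 0 => simp [ehit]
    | 0, b + 1 => simp [ehit]
    | a + 1, b =>
      have h : a + 1 + b = (a + b) + 1 := by omega
      rw [h]
      simp [ehit]
  | succ n ih =>
    intro a b
    match a with
    | 0 =>
      simp only [Nat.zero_add]
      rw [Finset.sum_range_succ']
      simp [ehit, Matrix.one_mul]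
    | a + 1 =>
      ext i j
      set F : ℕ → ℕ → Fin N → Fin N → ℝ≥0∞ := fun m k l x =>
        eL Λ m i l * (ehit Λ k (a + m) l x * ehit Λ (n - k) b x j) with hF
      have hL : ehit Λ (n + 1) (a + 1 + b) i j
          = ∑' m : ℕ, ∑ k ∈ Finset.range (n + 1), ∑ l, ∑ x, F m k l x := by
        have h : a + 1 + b = (a + b) + 1 := by omega
        rw [h, ehit_succ_succ]
        have h1 : ∀ (m : ℕ) (l : Fin N), eL Λ m i l * ehit Λ n (a + b + m) l j
            = ∑ k ∈ Finset.range (n + 1), ∑ x, F m k l x := by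
          intro m l
          have h2 : a + b + m = (a + m) + b := by omega
          rw [h2, ih (a + m) b, Matrix.sum_apply]
          simp only [Matrix.mul_apply, Finset.mul_sum, hF]
        simp only [h1]
        congr 1; funext m
        exact Finset.sum_comm
      rw [hL, Finset.sum_range_succ']
      have hzero : (ehit Λ 0 (a + 1) * ehit Λ (n + 1 - 0) b) i j = 0 := by
        simp [ehit, Matrix.mul_apply]
      rw [Matrix.add_apply, hzero, add_zero, Matrix.sum_apply]
      have hterm : ∀ k ∈ Finset.range (n + 1), (ehit Λ (k + 1) (a + 1) * ehit Λ (n + 1 - (k + 1)) b) i j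
          = ∑' m : ℕ, ∑ l, ∑ x, F m k l x := by
        intro k _
        have h3 : n + 1 - (k + 1) = n - k := by omega
        rw [h3, Matrix.mul_apply]
        have h4 : ∀ x : Fin N, ehit Λ (k + 1) (a + 1) i x * ehit Λ (n - k) b x j
            = ∑' m : ℕ, ∑ l, F m k l x := by
          intro x
          rw [ehit_succ_succ, ← ENNReal.tsum_mul_right]
          congr 1; funext m
          rw [Finset.sum_mul]
          simp only [hF, mul_assoc]
        simp only [h4]
        rw [← Summable.tsum_finsetSum (fun x _ => ENNReal.summable)]
        congr 1; funext m
        exact Finset.sum_comm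
      rw [Finset.sum_congr rfl hterm, ← Summable.tsum_finsetSum (fun k _ => ENNReal.summable)]

lemma tsum_diag (g : ℕ → ℕ → ℝ≥0∞) :
    ∑' n : ℕ, ∑ k ∈ Finset.range (n + 1), g k (n - k) = ∑' p : ℕ × ℕ, g p.1 p.2 := by
  rw [← Finset.HasAntidiagonal.sigmaAntidiagonalEquivProd.tsum_eq (fun p : ℕ × ℕ => g p.1 p.2),
    ENNReal.tsum_sigma']
  congr 1; funext n
  rw [show (fun b : (Finset.HasAntidiagonal.antidiagonal n : Finset (ℕ × ℕ)) =>
      (fun p : ℕ × ℕ => g p.1 p.2) (Finset.HasAntidiagonal.sigmaAntidiagonalEquivProd ⟨n, b⟩))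
      = fun b : (Finset.HasAntidiagonal.antidiagonal n : Finset (ℕ × ℕ)) => g (b : ℕ × ℕ).1 (b : ℕ × ℕ).2 from rfl]
  rw [Finset.tsum_subtype (Finset.HasAntidiagonal.antidiagonal n) (fun p : ℕ × ℕ => g p.1 p.2),
    Finset.Nat.sum_antidiagonal_eq_sum_range_succ_mk]

def eG (Λ : ℕ → Matrix (Fin N) (Fin N) ℝ) (w : ℝ≥0∞) (a : ℕ) : Matrix (Fin N) (Fin N) ℝ≥0∞ :=
  fun i j => ∑' n : ℕ, w ^ n * ehit Λ n a i j

lemma eG_apply (w : ℝ≥0∞) (a : ℕ) (i j : Fin N) :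
    eG Λ w a i j = ∑' n : ℕ, w ^ n * ehit Λ n a i j := rfl

lemma eG_zero (w : ℝ≥0∞) : eG Λ w 0 = 1 := by
  ext i j
  have h0 : ∀ n : ℕ, n ≠ 0 → w ^ n * ehit Λ n 0 i j = 0 := by
    intro n hn
    obtain ⟨n', rfl⟩ := Nat.exists_eq_succ_of_ne_zero hn
    rw [ehit_succ_zero]
    simp
  rw [eG_apply, tsum_eq_single 0 h0]
  simp

lemma eG_add (w : ℝ≥0∞) (a b : ℕ) : eG Λ w (a + b) = eG Λ w a * eG Λ w b := by
  ext i j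
  rw [Matrix.mul_apply]
  calc (∑' n : ℕ, w ^ n * ehit Λ n (a + b) i j)
      = ∑' n : ℕ, ∑ k ∈ Finset.range (n + 1), ∑ x,
          (w ^ k * ehit Λ k a i x) * (w ^ (n - k) * ehit Λ (n - k) b x j) := by
        congr 1; funext n
        rw [ehit_add, Matrix.sum_apply, Finset.mul_sum]
        refine Finset.sum_congr rfl fun k hk => ?_
        rw [Matrix.mul_apply, Finset.mul_sum]
        refine Finset.sum_congr rfl fun x _ => ?_
        have hw : w ^ n = w ^ k * w ^ (n - k) := by
          rw [← pow_add]
          congr 1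
          have := Finset.mem_range.mp hk; omega
        rw [hw]; ring
    _ = ∑ x, ∑' n : ℕ, ∑ k ∈ Finset.range (n + 1),
          (w ^ k * ehit Λ k a i x) * (w ^ (n - k) * ehit Λ (n - k) b x j) := by
        rw [← Summable.tsum_finsetSum (fun x _ => ENNReal.summable)]
        congr 1; funext n
        exact Finset.sum_comm
    _ = ∑ x, (∑' k : ℕ, w ^ k * ehit Λ k a i x) * (∑' l : ℕ, w ^ l * ehit Λ l b x j) := by
        refine Finset.sum_congr rfl fun x _ => ?_
        rw [tsum_diag (fun k l => (w ^ k * ehit Λ k a i x) * (w ^ l * ehit Λ l b x j)),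
          ENNReal.tsum_prod']
        simp only [ENNReal.tsum_mul_left, ENNReal.tsum_mul_right]
    _ = ∑ x, eG Λ w a i x * eG Λ w b x j := rfl

lemma eG_pow (w : ℝ≥0∞) : ∀ a : ℕ, eG Λ w a = eG Λ w 1 ^ a := by
  intro a
  induction a with
  | zero => rw [pow_zero]; exact eG_zero w
  | succ a ih => rw [pow_succ, ← ih, ← eG_add]

lemma eG_le_one (hΛ : ∀ m i j, 0 ≤ Λ m i j)
    (hP : ∀ i j, HasSum (fun m => Λ m i j) (P i j))
    (hPstoch : ∀ i, ∑ j, P i j = 1) {w : ℝ≥0∞} (hw : w ≤ 1) (a : ℕ) (i j : Fin N) :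
    eG Λ w a i j ≤ 1 := by
  rw [eG_apply, ENNReal.tsum_eq_iSup_sum]
  refine iSup_le fun s => ?_
  calc ∑ n ∈ s, w ^ n * ehit Λ n a i j ≤ ∑ n ∈ s, ehit Λ n a i j := by
        refine Finset.sum_le_sum fun n _ => ?_
        calc w ^ n * ehit Λ n a i j ≤ 1 * ehit Λ n a i j :=
              mul_le_mul_left (pow_le_one' hw n) _
          _ = ehit Λ n a i j := one_mul _
    _ ≤ ∑ n ∈ Finset.range ((s.sup id) + 1), ehit Λ n a i j := by
        refine Finset.sum_le_sum_of_subset fun n hn => Finset.mem_range.mpr ?_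
        have := Finset.le_sup (f := id) hn
        simp only [id] at this; omega
    _ ≤ ∑ j', ∑ n ∈ Finset.range ((s.sup id) + 1), ehit Λ n a i j' :=
        Finset.single_le_sum (f := fun j' => ∑ n ∈ Finset.range ((s.sup id) + 1), ehit Λ n a i j')
          (fun j' _ => zero_le) (Finset.mem_univ j)
    _ ≤ 1 := ehit_mass hΛ hP hPstoch _ a i

lemma eG_main (w : ℝ≥0∞) (i j : Fin N) :
    eG Λ w 1 i j = ∑' m : ℕ, w * (eL Λ m * eG Λ w 1 ^ m) i j := by
  calc eG Λ w 1 i j = ∑' n : ℕ, w ^ (n + 1) * ehit Λ (n + 1) 1 i j := by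
        rw [eG_apply, tsum_eq_zero_add' ENNReal.summable]
        simp
    _ = ∑' n : ℕ, ∑' m : ℕ, ∑ l, w * eL Λ m i l * (w ^ n * ehit Λ n m l j) := by
        congr 1; funext n
        rw [show (1 : ℕ) = 0 + 1 from rfl, ehit_succ_succ, ← ENNReal.tsum_mul_left]
        congr 1; funext m
        rw [Finset.mul_sum]
        refine Finset.sum_congr rfl fun l _ => ?_
        rw [Nat.zero_add]
        rw [pow_succ]; ring_nf
    _ = ∑' m : ℕ, ∑' n : ℕ, ∑ l, w * eL Λ m i l * (w ^ n * ehit Λ n m l j) := ENNReal.tsum_comm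
    _ = ∑' m : ℕ, ∑ l, w * eL Λ m i l * eG Λ w m l j := by
        congr 1; funext m
        rw [Summable.tsum_finsetSum (fun l _ => ENNReal.summable)]
        refine Finset.sum_congr rfl fun l _ => ?_
        rw [ENNReal.tsum_mul_left, ← eG_apply]
    _ = ∑' m : ℕ, w * (eL Λ m * eG Λ w 1 ^ m) i j := by
        congr 1; funext m
        rw [← eG_pow, Matrix.mul_apply, Finset.mul_sum]
        refine Finset.sum_congr rfl fun l _ => ?_
        ring



/-- ENNReal path weight. -/
def ew (Λ : ℕ → Matrix (Fin N) (Fin N) ℝ) (μ : Fin N → ℝ) (n : ℕ)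
    (J : Fin (n + 1) → Fin N) (C : Fin n → ℕ) : ℝ≥0∞ :=
  ENNReal.ofReal (μ (J 0)) * ∏ k : Fin n, ENNReal.ofReal (Λ (C k) (J k.castSucc) (J k.succ))

def eprob (Λ : ℕ → Matrix (Fin N) (Fin N) ℝ) (μ : Fin N → ℝ) (n : ℕ)
    (A : (Fin (n + 1) → Fin N) → (Fin n → ℕ) → Prop) : ℝ≥0∞ :=
  ∑' p : { p : (Fin (n + 1) → Fin N) × (Fin n → ℕ) // A p.1 p.2 },
    ew Λ μ n (p : (Fin (n + 1) → Fin N) × (Fin n → ℕ)).1 (p : (Fin (n + 1) → Fin N) × (Fin n → ℕ)).2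

lemma ew_ne_top (μ : Fin N → ℝ) (n : ℕ) (J : Fin (n + 1) → Fin N) (C : Fin n → ℕ) :
    ew Λ μ n J C ≠ ⊤ :=
  ENNReal.mul_ne_top ENNReal.ofReal_ne_top
    (ENNReal.prod_ne_top fun _ _ => ENNReal.ofReal_ne_top)

lemma prob_eq_toReal (hΛ : ∀ m i j, 0 ≤ Λ m i j) (μ : Fin N → ℝ) (hμ : ∀ x, 0 ≤ μ x) (n : ℕ)
    (A : (Fin (n + 1) → Fin N) → (Fin n → ℕ) → Prop) :
    prob Λ μ n A = (eprob Λ μ n A).toReal := by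
  rw [prob, eprob, ENNReal.tsum_toReal_eq (fun p => ew_ne_top μ n _ _)]
  congr 1; funext p
  rw [ew, pathWeight, ENNReal.toReal_mul, ENNReal.toReal_ofReal (hμ _), ENNReal.toReal_prod]
  exact congrArg _ (Finset.prod_congr rfl fun k _ => (ENNReal.toReal_ofReal (hΛ _ _ _)).symm)

lemma eprob_eq_tsum_ite (μ : Fin N → ℝ) (n : ℕ)
    (A : (Fin (n + 1) → Fin N) → (Fin n → ℕ) → Prop) :
    eprob Λ μ n A = ∑' p : (Fin (n + 1) → Fin N) × (Fin n → ℕ),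
      (if A p.1 p.2 then ew Λ μ n p.1 p.2 else 0) := by
  classical
  rw [eprob]; erw [tsum_subtype {p : (Fin (n + 1) → Fin N) × (Fin n → ℕ) | A p.1 p.2}
    (fun p => ew Λ μ n p.1 p.2)]
  exact tsum_congr fun p => by rw [Set.indicator_apply]; rfl

/-- The first-passage event. -/
def Ev (n a : ℕ) (j : Fin N) (J : Fin (n + 1) → Fin N) (C : Fin n → ℕ) : Prop :=
  (∀ k, k < n → (k : ℤ) - S C k < (a : ℤ)) ∧ (a : ℤ) ≤ (n : ℤ) - S C n ∧ J (Fin.last n) = j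

lemma hitM_eq_prob (n a : ℕ) (i j : Fin N) :
    hitM Λ n a i j = prob Λ (delta i) n (Ev n a j) := rfl

lemma S_zero {n : ℕ} (C : Fin n → ℕ) : S C 0 = 0 := by simp [S]

lemma S_cons {n : ℕ} (m : ℕ) (C : Fin n → ℕ) (k : ℕ) :
    S (Fin.cons m C) (k + 1) = m + S C k := by
  rw [S, Fin.sum_univ_succ]
  simp [S, Fin.cons_succ, Nat.succ_lt_succ_iff]

lemma Ev_cons {n a m : ℕ} {j j0 : Fin N} {J : Fin (n + 1) → Fin N} {C : Fin n → ℕ} :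
    Ev (n + 1) (a + 1) j (Fin.cons j0 J) (Fin.cons m C) ↔ Ev n (a + m) j J C := by
  constructor
  · rintro ⟨h1, h2, h3⟩
    refine ⟨fun k hk => ?_, ?_, ?_⟩
    · have := h1 (k + 1) (by omega)
      rw [S_cons] at this
      push_cast at this ⊢
      omega
    · rw [S_cons] at h2
      push_cast at h2 ⊢
      omega
    · rwa [← Fin.succ_last, Fin.cons_succ] at h3
  · rintro ⟨h1, h2, h3⟩
    refine ⟨fun k hk => ?_, ?_, ?_⟩
    · match k with
      | 0 => rw [S_zero]; push_cast; omega
      | k + 1 =>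
        have := h1 k (by omega)
        rw [S_cons]
        push_cast at this ⊢
        omega
    · rw [S_cons]
      push_cast at h2 ⊢
      omega
    · rwa [← Fin.succ_last, Fin.cons_succ]

lemma Ev_succ_zero {n : ℕ} {j : Fin N} {J : Fin (n + 2) → Fin N} {C : Fin (n + 1) → ℕ} :
    ¬ Ev (n + 1) 0 j J C := by
  rintro ⟨h1, -, -⟩
  have := h1 0 (Nat.succ_pos n)
  rw [S_zero] at this
  simp at this

lemma ew_cons (μ : Fin N → ℝ) (n : ℕ) (j0 : Fin N) (J : Fin (n + 1) → Fin N)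
    (m : ℕ) (C : Fin n → ℕ) :
    ew Λ μ (n + 1) (Fin.cons j0 J) (Fin.cons m C)
      = ENNReal.ofReal (μ j0) * (ENNReal.ofReal (Λ m j0 (J 0)) *
        ∏ k : Fin n, ENNReal.ofReal (Λ (C k) (J k.castSucc) (J k.succ))) := by
  rw [ew, Fin.prod_univ_succ]
  simp only [Fin.cons_zero, Fin.castSucc_zero, ← Fin.succ_castSucc, Fin.cons_succ]

lemma eprob_succ (i : Fin N) (n : ℕ) (A : (Fin (n + 2) → Fin N) → (Fin (n + 1) → ℕ) → Prop)
    (B : ℕ → (Fin (n + 1) → Fin N) → (Fin n → ℕ) → Prop)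
    (hAB : ∀ (j0 : Fin N) (J : Fin (n + 1) → Fin N) (m : ℕ) (C : Fin n → ℕ),
      A (Fin.cons j0 J) (Fin.cons m C) ↔ B m J C) :
    eprob Λ (delta i) (n + 1) A
      = ∑' m : ℕ, ∑ l, ENNReal.ofReal (Λ m i l) * eprob Λ (delta l) n (B m) := by
  classical
  set W : (Fin (n + 1) → Fin N) → (Fin n → ℕ) → ℝ≥0∞ := fun J C =>
    ∏ k : Fin n, ENNReal.ofReal (Λ (C k) (J k.castSucc) (J k.succ)) with hW
  set e : ((Fin N × ℕ) × ((Fin (n + 1) → Fin N) × (Fin n → ℕ)))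
      ≃ ((Fin (n + 2) → Fin N) × (Fin (n + 1) → ℕ)) :=
    (Equiv.prodProdProdComm (Fin N) ℕ (Fin (n + 1) → Fin N) (Fin n → ℕ)).trans
      ((Fin.consEquiv (fun _ => Fin N)).prodCongr (Fin.consEquiv (fun _ => ℕ))) with he
  have he' : ∀ q : (Fin N × ℕ) × ((Fin (n + 1) → Fin N) × (Fin n → ℕ)),
      e q = (Fin.cons q.1.1 q.2.1, Fin.cons q.1.2 q.2.2) := fun q => rfl
  rw [eprob_eq_tsum_ite, ← e.tsum_eq (fun p => if A p.1 p.2 then ew Λ (delta i) (n + 1) p.1 p.2 else 0)]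
  calc (∑' q : (Fin N × ℕ) × ((Fin (n + 1) → Fin N) × (Fin n → ℕ)),
        if A (e q).1 (e q).2 then ew Λ (delta i) (n + 1) (e q).1 (e q).2 else 0)
      = ∑ j0 : Fin N, ∑' m : ℕ, ∑' b : (Fin (n + 1) → Fin N) × (Fin n → ℕ),
          ENNReal.ofReal (delta i j0) *
            (if B m b.1 b.2 then ENNReal.ofReal (Λ m j0 (b.1 0)) * W b.1 b.2 else 0) := by
        rw [ENNReal.tsum_prod', ENNReal.tsum_prod', tsum_fintype]
        refine Finset.sum_congr rfl fun j0 _ => ?_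
        refine tsum_congr fun m => tsum_congr fun b => ?_
        rw [he' ((j0, m), b), hAB, ew_cons, mul_ite, mul_zero]
    _ = ∑ j0 : Fin N, ENNReal.ofReal (delta i j0) * (∑' m : ℕ,
          ∑' b : (Fin (n + 1) → Fin N) × (Fin n → ℕ),
          (if B m b.1 b.2 then ENNReal.ofReal (Λ m i (b.1 0)) * W b.1 b.2 else 0)) := by
        refine Finset.sum_congr rfl fun j0 _ => ?_
        simp only [ENNReal.tsum_mul_left]
        by_cases hj : j0 = i
        · subst hj; rfl
        · simp [delta, hj]
    _ = ∑' m : ℕ, ∑' b : (Fin (n + 1) → Fin N) × (Fin n → ℕ),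
          (if B m b.1 b.2 then ENNReal.ofReal (Λ m i (b.1 0)) * W b.1 b.2 else 0) := by
        simp only [show ∀ j0 : Fin N, ENNReal.ofReal (delta i j0)
            = if j0 = i then (1 : ℝ≥0∞) else 0 from fun j0 => by
              simp [delta, apply_ite ENNReal.ofReal]]
        simp only [ite_mul, one_mul, zero_mul]
        rw [Finset.sum_ite_eq' Finset.univ i]
        simp
    _ = ∑' m : ℕ, ∑ l, ENNReal.ofReal (Λ m i l) * eprob Λ (delta l) n (B m) := by
        refine tsum_congr fun m => ?_
        have h5 : ∀ l : Fin N, ENNReal.ofReal (Λ m i l) * eprob Λ (delta l) n (B m)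
            = ∑' b : (Fin (n + 1) → Fin N) × (Fin n → ℕ),
              ENNReal.ofReal (Λ m i l) * (if B m b.1 b.2 then ew Λ (delta l) n b.1 b.2 else 0) := by
          intro l; rw [eprob_eq_tsum_ite, ENNReal.tsum_mul_left]
        simp only [h5]
        rw [← Summable.tsum_finsetSum (fun l _ => ENNReal.summable)]
        refine tsum_congr fun b => ?_
        by_cases hB : B m b.1 b.2
        · simp only [hB, if_true]
          have h6 : ∀ l : Fin N, ew Λ (delta l) n b.1 b.2
              = (if b.1 0 = l then (1 : ℝ≥0∞) else 0) * W b.1 b.2 := by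
            intro l
            rw [ew]
            congr 1
            simp [delta, apply_ite ENNReal.ofReal]
          simp only [h6]
          symm
          calc ∑ l, ENNReal.ofReal (Λ m i l) * ((if b.1 0 = l then (1 : ℝ≥0∞) else 0) * W b.1 b.2)
              = ∑ l, (if b.1 0 = l then ENNReal.ofReal (Λ m i l) * W b.1 b.2 else 0) :=
                Finset.sum_congr rfl fun l _ => by split <;> simp
            _ = ENNReal.ofReal (Λ m i (b.1 0)) * W b.1 b.2 := by
                rw [Finset.sum_ite_eq Finset.univ (b.1 0)]
                simp
        · simp [hB]

lemma eprob_hit : ∀ (n a : ℕ) (i j : Fin N),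
    eprob Λ (delta i) n (Ev n a j) = ehit Λ n a i j := by
  intro n
  induction n with
  | zero =>
    intro a i j
    rw [eprob_eq_tsum_ite]
    match a with
    | 0 =>
      rw [tsum_eq_single ((fun _ => j, (default : Fin 0 → ℕ)) :
          (Fin 1 → Fin N) × (Fin 0 → ℕ)) ?_]
      · have hEv : Ev 0 0 j (fun _ => j) (default : Fin 0 → ℕ) := by
          refine ⟨fun k hk => absurd hk (by omega), ?_, rfl⟩
          rw [S_zero]; simp
        rw [if_pos hEv, ew]
        simp only [delta, Matrix.one_apply, ehit_zero_zero, eq_comm]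
        split <;> simp
      · intro p hp
        rw [if_neg]
        rintro ⟨-, -, h3⟩
        apply hp
        have h4 : p.1 = fun _ => j := by
          funext x
          rw [Subsingleton.elim x (Fin.last 0)]
          exact h3
        have h5 : p.2 = default := Subsingleton.elim _ _
        rw [← h4, ← h5]
    | a + 1 =>
      rw [show ehit Λ 0 (a + 1) i j = 0 from by simp]
      refine ENNReal.summable.tsum_eq_zero_iff |>.mpr fun p => ?_
      rw [if_neg]
      rintro ⟨-, h2, -⟩
      rw [S_zero] at h2
      omega
  | succ n ih =>
    intro a i j
    match a with
    | 0 =>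
      rw [show ehit Λ (n + 1) 0 i j = 0 from by simp]
      rw [eprob_eq_tsum_ite]
      refine ENNReal.summable.tsum_eq_zero_iff |>.mpr fun p => ?_
      exact if_neg Ev_succ_zero
    | a + 1 =>
      rw [eprob_succ i n (Ev (n + 1) (a + 1) j) (fun m J C => Ev n (a + m) j J C)
        (fun j0 J m C => Ev_cons), ehit_succ_succ]
      refine tsum_congr fun m => Finset.sum_congr rfl fun l _ => ?_
      rw [ih (a + m) l j]
      rfl

end ENN

/-- Lundberg's equation, right solution.  For `v ∈ (0,1]`, the matrix
`G_v = Σ_n v^n M(n,1)` satisfies `G_v = v·Σ_{m=0}^∞ Λ(m)·G_v^m`, the series on the right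
converging entrywise. -/
theorem lundberg_right
    {N : ℕ} (hN : 1 ≤ N)
    (Λ : ℕ → Matrix (Fin N) (Fin N) ℝ) (P : Matrix (Fin N) (Fin N) ℝ)
    (hΛ : ∀ m i j, 0 ≤ Λ m i j)
    (hP : ∀ i j, HasSum (fun m => Λ m i j) (P i j))
    (hPstoch : ∀ i, ∑ j, P i j = 1)
    (v : ℝ) (hv0 : 0 < v) (hv1 : v ≤ 1) :
    ∀ i j, HasSum (fun m : ℕ => v * (Λ m * Gser Λ v 1 ^ m) i j) (Gser Λ v 1 i j) := by
  intro i j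
  set w : ℝ≥0∞ := ENNReal.ofReal v with hwdef
  have hw1 : w ≤ 1 := ENNReal.ofReal_le_one.mpr hv1
  have hehit : ∀ n a (i j : Fin N), ehit Λ n a i j ≤ 1 := by
    intro n a i' j'
    calc ehit Λ n a i' j'
        ≤ ∑ n' ∈ Finset.range (n + 1), ehit Λ n' a i' j' :=
          Finset.single_le_sum (f := fun n' => ehit Λ n' a i' j')
            (fun _ _ => zero_le) (Finset.mem_range.mpr (by omega))
      _ ≤ ∑ j'', ∑ n' ∈ Finset.range (n + 1), ehit Λ n' a i' j'' :=
          Finset.single_le_sum (f := fun j'' => ∑ n' ∈ Finset.range (n + 1), ehit Λ n' a i' j'')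
            (fun _ _ => zero_le) (Finset.mem_univ j')
      _ ≤ 1 := ehit_mass hΛ hP hPstoch _ a i'
  have hehit_ne : ∀ n a (i j : Fin N), ehit Λ n a i j ≠ ⊤ :=
    fun n a i' j' => ne_top_of_le_ne_top ENNReal.one_ne_top (hehit n a i' j')
  have hdelta : ∀ i' : Fin N, ∀ x, 0 ≤ delta i' x := by
    intro i' x
    unfold delta
    split <;> norm_num
  have hit_toReal : ∀ n a (i j : Fin N), hitM Λ n a i j = (ehit Λ n a i j).toReal := by
    intro n a i' j'
    rw [hitM_eq_prob, prob_eq_toReal hΛ (delta i') (hdelta i') n (Ev n a j'), eprob_hit]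
  have hG : ∀ i' j' : Fin N, Gser Λ v 1 i' j' = (eG Λ w 1 i' j').toReal := by
    intro i' j'
    have hterm : ∀ n : ℕ, v ^ n * hitM Λ n 1 i' j' = (w ^ n * ehit Λ n 1 i' j').toReal := by
      intro n
      rw [ENNReal.toReal_mul, hit_toReal]
      congr 1
      rw [hwdef, ← ENNReal.ofReal_pow hv0.le, ENNReal.toReal_ofReal (pow_nonneg hv0.le n)]
    calc Gser Λ v 1 i' j' = ∑' n : ℕ, (w ^ n * ehit Λ n 1 i' j').toReal := tsum_congr hterm
      _ = (∑' n : ℕ, w ^ n * ehit Λ n 1 i' j').toReal :=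
          (ENNReal.tsum_toReal_eq fun n =>
            ENNReal.mul_ne_top (ENNReal.pow_ne_top ENNReal.ofReal_ne_top)
              (hehit_ne n 1 i' j')).symm
      _ = (eG Λ w 1 i' j').toReal := by rw [eG_apply]
  have hGfin : ∀ i' j' : Fin N, eG Λ w 1 i' j' ≠ ⊤ :=
    fun i' j' => ne_top_of_le_ne_top ENNReal.one_ne_top (eG_le_one hΛ hP hPstoch hw1 1 i' j')
  have hpow : ∀ m : ℕ, (∀ i' j' : Fin N, (eG Λ w 1 ^ m) i' j' ≠ ⊤) ∧
      (∀ i' j' : Fin N, (Gser Λ v 1 ^ m) i' j' = ((eG Λ w 1 ^ m) i' j').toReal) := by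
    intro m
    induction m with
    | zero =>
      refine ⟨fun i' j' => ?_, fun i' j' => ?_⟩
      · rw [pow_zero, Matrix.one_apply]
        split <;> simp
      · rw [pow_zero, pow_zero, Matrix.one_apply, Matrix.one_apply]
        split <;> simp
    | succ m ihm =>
      constructor <;> intro i' j'
      · rw [pow_succ, Matrix.mul_apply]
        exact ENNReal.sum_ne_top.mpr fun l _ => ENNReal.mul_ne_top (ihm.1 i' l) (hGfin l j')
      · rw [pow_succ, pow_succ, Matrix.mul_apply, Matrix.mul_apply,
          ENNReal.toReal_sum (fun l _ => ENNReal.mul_ne_top (ihm.1 i' l) (hGfin l j'))]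
        refine Finset.sum_congr rfl fun l _ => ?_
        rw [ENNReal.toReal_mul, ihm.2 i' l, hG l j']
  have hterm2 : ∀ m : ℕ, v * (Λ m * Gser Λ v 1 ^ m) i j
      = (w * (eL Λ m * eG Λ w 1 ^ m) i j).toReal := by
    intro m
    have hrhs : (w * (eL Λ m * eG Λ w 1 ^ m) i j).toReal
        = v * ∑ l, Λ m i l * ((eG Λ w 1 ^ m) l j).toReal := by
      rw [ENNReal.toReal_mul, hwdef, ENNReal.toReal_ofReal hv0.le, Matrix.mul_apply,
        ENNReal.toReal_sum (f := fun l => eL Λ m i l * (eG Λ w 1 ^ m) l j) (fun l _ =>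
          ENNReal.mul_ne_top ENNReal.ofReal_ne_top ((hpow m).1 l j))]
      congr 1
      refine Finset.sum_congr rfl fun l _ => ?_
      rw [ENNReal.toReal_mul, show eL Λ m i l = ENNReal.ofReal (Λ m i l) from rfl,
        ENNReal.toReal_ofReal (hΛ m i l)]
    rw [hrhs, Matrix.mul_apply]
    congr 1
    exact Finset.sum_congr rfl fun l _ => by rw [(hpow m).2 l j]
  have hmain := eG_main (Λ := Λ) w i j
  have htot : (∑' m : ℕ, w * (eL Λ m * eG Λ w 1 ^ m) i j) ≠ ⊤ := by
    rw [← hmain]; exact hGfin i j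
  have hfun : (fun m : ℕ => v * (Λ m * Gser Λ v 1 ^ m) i j)
      = fun m : ℕ => (w * (eL Λ m * eG Λ w 1 ^ m) i j).toReal := funext hterm2
  rw [hfun, hG i j, hmain,
    ENNReal.tsum_toReal_eq (fun m => ne_top_of_le_ne_top htot (ENNReal.le_tsum m))]
  exact (ENNReal.summable_toReal htot).hasSum

end CMB
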